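/- Let A be a symmetric positive definite real 3×3 matrix, u ∈ ℝ³ a unit vector, and Θ a nonempty finite set of reals with 0 < |θ'| ≤ π for every θ' ∈ Θ; set θ_m := min_{θ'∈Θ} |θ'|. Suppose Δ* > 0 is such that Δ(v,u) ≥ Δ* for every unit eigenvector v of A. Let 0 < γ < 4Δ*/π² and 0 < δ < (4Δ*/π² − γ)·θ_m²/2. Then for every unit eigenvector v of A: U(Ra(π,v),0) − min_{θ'∈Θ} U(Ra(π,v),θ') > δ. -/

import Mathlib

open Matrix

noncomputable section

abbrev M3 : Type := Matrix (Fin 3) (Fin 3) ℝ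
abbrev V3 : Type := Fin 3 → ℝ

/-- skew-symmetric matrix associated to `x`: `skew x *ᵥ y = x ×₃ y`. -/
def skew (x : V3) : M3 :=
  !![0, -x 2, x 1; x 2, 0, -x 0; -x 1, x 0, 0]

/-- the special orthogonal group SO(3) as a subset of 3×3 matrices -/
def SO3 : Set M3 := {R | Rᵀ * R = 1 ∧ R.det = 1}

/-- Rodrigues formula -/
def Ra (θ : ℝ) (u : V3) : M3 :=
  1 + Real.sin θ • skew u + (1 - Real.cos θ) • (skew u * skew u)

/-- `psi M = vec (P_a M)`, the vector part of the antisymmetric projection -/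
def psi (M : M3) : V3 :=
  ![(M 2 1 - M 1 2) / 2, (M 0 2 - M 2 0) / 2, (M 1 0 - M 0 1) / 2]

/-- the angular-warping transformation `T(R,θ) = R · Ra(θ,u)` -/
def Tmap (u : V3) (R : M3) (θ : ℝ) : M3 := R * Ra θ u

/-- the potential function `U(R,θ)` on SO(3) × ℝ -/
def Ufun (A : M3) (u : V3) (γ : ℝ) (R : M3) (θ : ℝ) : ℝ :=
  (A * (1 - Tmap u R θ)).trace + γ / 2 * θ ^ 2

/-- Euclidean norm on ℝ³ -/
def enorm3 (x : V3) : ℝ := Real.sqrt (x ⬝ᵥ x)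

/-- Frobenius norm of a 3×3 matrix -/
def fnorm (M : M3) : ℝ := Real.sqrt ((Mᵀ * M).trace)

/-- `E(M) := (tr(M) I − Mᵀ)/2` -/
def Emap (M : M3) : M3 := (2⁻¹ : ℝ) • (M.trace • (1 : M3) - Mᵀ)

/-- `D_R(R,θ)` from Lemma 2 -/
def DR (A : M3) (u : V3) (R : M3) (θ : ℝ) : M3 :=
  Ra θ u * Emap (A * Tmap u R θ) * (Ra θ u)ᵀ

/-- `D_θ(R,θ)` from Lemma 2 -/
def Dθ (A : M3) (u : V3) (R : M3) (θ : ℝ) : V3 :=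
  (Ra θ u * Emap (A * Tmap u R θ)) *ᵥ u - skew (Ra θ u *ᵥ psi (A * Tmap u R θ)) *ᵥ u

/-- Δ(v,u) from the construction of the synergistic gap -/
def Delta (A : M3) (v u : V3) : ℝ :=
  u ⬝ᵥ ((A.trace • (1 : M3) - A - (2 * (v ⬝ᵥ A *ᵥ v)) • ((1 : M3) - vecMulVec v v)) *ᵥ u)

/-- `v` is a unit eigenvector of `A` -/
def IsUnitEigen (A : M3) (v : V3) : Prop :=
  v ⬝ᵥ v = 1 ∧ ∃ lam : ℝ, A *ᵥ v = lam • v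

/-- Ā := (tr(A) I − A)/2 -/
def Abar (A : M3) : M3 := (2⁻¹ : ℝ) • (A.trace • (1 : M3) - A)

/-- `lam` is an eigenvalue of `M` -/
def IsEigen (M : M3) (lam : ℝ) : Prop := ∃ w : V3, w ≠ 0 ∧ M *ᵥ w = lam • w

set_option maxRecDepth 10000 in
theorem key_gap (A : M3) (hs01 : A 0 1 = A 1 0) (hs02 : A 0 2 = A 2 0) (hs12 : A 1 2 = A 2 1)
    (u v : V3) (hv : v ⬝ᵥ v = 1) (lam : ℝ) (hev : A *ᵥ v = lam • v) (γ θ : ℝ) :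
    Ufun A u γ (Ra Real.pi v) 0 - Ufun A u γ (Ra Real.pi v) θ
      = (1 - Real.cos θ) * Delta A v u - γ / 2 * θ ^ 2 := by
  have he0 := congrFun hev 0
  have he1 := congrFun hev 1
  have he2 := congrFun hev 2
  simp only [Matrix.mulVec, dotProduct, Fin.sum_univ_three, Pi.smul_apply,
    smul_eq_mul] at he0 he1 he2 hv
  simp only [Ufun, Tmap, Ra, Delta, Matrix.trace, Matrix.diag, Fin.sum_univ_three,
    Real.sin_pi, Real.cos_pi, Real.sin_zero, Real.cos_zero, Matrix.mulVec, dotProduct,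
    Matrix.mul_apply, Matrix.add_apply, Matrix.sub_apply, Matrix.smul_apply, Matrix.one_apply,
    Matrix.vecMulVec_apply, skew, Matrix.cons_val', Matrix.cons_val_zero, Matrix.cons_val_one,
    Matrix.head_cons, Matrix.head_fin_const, Matrix.empty_val', Matrix.cons_val_fin_one,
    Matrix.cons_val_two, Matrix.tail_cons, smul_eq_mul, Fin.sum_univ_three]
  norm_num [Fin.ext_iff]
  simp only [Matrix.cons_val]
  set c := Real.cos θ
  set s := Real.sin θ
  linear_combination
    (-2*s*(u 1*v 2 - u 2*v 1)
      + 2*(1-c)*(u 0*v 0+u 1*v 1+u 2*v 2)*(u 0 - (u 0*v 0+u 1*v 1+u 2*v 2)*v 0)) * he0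
    + (-2*s*(u 2*v 0 - u 0*v 2)
      + 2*(1-c)*(u 0*v 0+u 1*v 1+u 2*v 2)*(u 1 - (u 0*v 0+u 1*v 1+u 2*v 2)*v 1)) * he1
    + (-2*s*(u 0*v 1 - u 1*v 0)
      + 2*(1-c)*(u 0*v 0+u 1*v 1+u 2*v 2)*(u 2 - (u 0*v 0+u 1*v 1+u 2*v 2)*v 2)) * he2
    + (-2*(s*(u 2*(A 0 1 - A 1 0) + u 1*(A 2 0 - A 0 2) + u 0*(A 1 2 - A 2 1))
        + (1-c)*((u 0*(A 0 0*u 0 + A 0 1*u 1 + A 0 2*u 2)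
                  + u 1*(A 1 0*u 0 + A 1 1*u 1 + A 1 2*u 2)
                  + u 2*(A 2 0*u 0 + A 2 1*u 1 + A 2 2*u 2))
            - (u 0^2+u 1^2+u 2^2)*(A 0 0 + A 1 1 + A 2 2)))
      - 2*lam*(1-c)*(u 0*v 0+u 1*v 1+u 2*v 2)^2) * hv
    + (-s*u 2) * hs01 + (s*u 1) * hs02 + (-s*u 0) * hs12

theorem synergistic_gap
    (A : M3) (hA : A.PosDef) (u : V3) (hu : u ⬝ᵥ u = 1)
    (Θ : Finset ℝ) (hΘne : Θ.Nonempty) (hΘ : ∀ θ' ∈ Θ, 0 < |θ'| ∧ |θ'| ≤ Real.pi)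
    (θm : ℝ) (hθm : θm = Θ.inf' hΘne (fun θ' => |θ'|))
    (Δstar : ℝ) (hΔpos : 0 < Δstar)
    (hΔ : ∀ v : V3, IsUnitEigen A v → Δstar ≤ Delta A v u)
    (γ δ : ℝ) (hγ : 0 < γ) (hγ' : γ < 4 * Δstar / Real.pi ^ 2)
    (hδ : 0 < δ) (hδ' : δ < (4 * Δstar / Real.pi ^ 2 - γ) * θm ^ 2 / 2) :
    ∀ v : V3, IsUnitEigen A v →
      Ufun A u γ (Ra Real.pi v) 0 -
        Θ.inf' hΘne (fun θ' => Ufun A u γ (Ra Real.pi v) θ') > δ := by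
  intro v hvv
  obtain ⟨hv, lam, hev⟩ := hvv
  have hπ := Real.pi_pos
  have hsym := hA.isHermitian
  have hs01 : A 0 1 = A 1 0 := by
    simpa [Matrix.conjTranspose_apply] using congrFun (congrFun hsym 1) 0
  have hs02 : A 0 2 = A 2 0 := by
    simpa [Matrix.conjTranspose_apply] using congrFun (congrFun hsym 2) 0
  have hs12 : A 1 2 = A 2 1 := by
    simpa [Matrix.conjTranspose_apply] using congrFun (congrFun hsym 2) 1
  obtain ⟨θ₀, hmem, hval⟩ :=
    Finset.exists_mem_eq_inf' hΘne (fun θ' => Ufun A u γ (Ra Real.pi v) θ')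
  rw [hval]
  show Ufun A u γ (Ra Real.pi v) 0 - Ufun A u γ (Ra Real.pi v) θ₀ > δ
  rw [key_gap A hs01 hs02 hs12 u v hv lam hev γ θ₀]
  have habs := hΘ θ₀ hmem
  have hcos : Real.cos θ₀ ≤ 1 - 2 / Real.pi ^ 2 * θ₀ ^ 2 :=
    Real.cos_le_one_sub_mul_cos_sq habs.2
  have hD := hΔ v ⟨hv, lam, hev⟩
  have hθm' : θm ≤ |θ₀| := hθm ▸ Finset.inf'_le _ hmem
  have hθmpos : 0 < θm := by
    obtain ⟨θ₁, h1mem, h1⟩ := Finset.exists_mem_eq_inf' hΘne (fun θ' => |θ'|)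
    rw [hθm, h1]; exact (hΘ θ₁ h1mem).1
  have hsq : θm ^ 2 ≤ θ₀ ^ 2 := by
    nlinarith [sq_abs θ₀, abs_nonneg θ₀]
  have hcoef : 0 < 4 * Δstar / Real.pi ^ 2 - γ := by linarith
  have ht0 : (0:ℝ) ≤ 2 / Real.pi ^ 2 * θ₀ ^ 2 := by positivity
  have h1c : 2 / Real.pi ^ 2 * θ₀ ^ 2 ≤ 1 - Real.cos θ₀ := by linarith
  have hstep1 : 2 / Real.pi ^ 2 * θ₀ ^ 2 * Δstar ≤ (1 - Real.cos θ₀) * Δstar :=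
    mul_le_mul_of_nonneg_right h1c hΔpos.le
  have hstep2 : (1 - Real.cos θ₀) * Δstar ≤ (1 - Real.cos θ₀) * Delta A v u :=
    mul_le_mul_of_nonneg_left hD (by linarith)
  have heq : 2 / Real.pi ^ 2 * θ₀ ^ 2 * Δstar = 4 * Δstar / Real.pi ^ 2 * θ₀ ^ 2 / 2 := by
    field_simp; ring
  have hstep3 : (4 * Δstar / Real.pi ^ 2 - γ) * θm ^ 2 / 2
      ≤ (4 * Δstar / Real.pi ^ 2 - γ) * θ₀ ^ 2 / 2 := by
    have := mul_le_mul_of_nonneg_left hsq hcoef.le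
    linarith
  have hexp : (4 * Δstar / Real.pi ^ 2 - γ) * θ₀ ^ 2 / 2
      = 4 * Δstar / Real.pi ^ 2 * θ₀ ^ 2 / 2 - γ / 2 * θ₀ ^ 2 := by ring
  linarith
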